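/- arXiv:2302.06640 — 2 statements merged into one kernel-verified Lean document; each statement's English description precedes it below -/
import Mathlib

section
/- Let m ≥ 2 be an even integer and let x be a real number with 0 < x < 1. Then log(((1-x)/x)^m + 1) = Σ_{k=0}^{m/2 - 1} log(1 - 2x(1-x)(φ_k + 1)) - m·log x, where φ_k = cos((2k+1)π/m). -/
open Finset in
lemma cfact (m : ℕ) (hm : 0 < m) (y : ℂ) :
    y ^ m + 1 = ∏ k ∈ Finset.range m,
      (y - Complex.exp ((2 * (k : ℂ) + 1) * Real.pi / m * Complex.I)) := by
  have hmC : (m : ℂ) ≠ 0 := Nat.cast_ne_zero.mpr hm.ne'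
  have hζ : IsPrimitiveRoot (Complex.exp (2 * Real.pi * Complex.I / m)) m :=
    Complex.isPrimitiveRoot_exp m hm.ne'
  have e : (Complex.exp (Real.pi * Complex.I / m)) ^ m = -1 := by
    rw [← Complex.exp_nat_mul]
    rw [show (m : ℂ) * (Real.pi * Complex.I / m) = Real.pi * Complex.I by field_simp]
    exact Complex.exp_pi_mul_I
  have h := X_pow_sub_C_eq_prod hζ hm e
  apply_fun Polynomial.eval y at h
  simp only [Polynomial.eval_sub, Polynomial.eval_pow, Polynomial.eval_X, Polynomial.eval_C,
    Polynomial.eval_prod, Polynomial.eval_mul] at h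
  rw [show (y ^ m + 1 : ℂ) = y ^ m - (-1) by ring, h]
  refine Finset.prod_congr rfl fun k _ => ?_
  congr 1
  rw [← Complex.exp_nat_mul, ← Complex.exp_add]
  congr 1
  rw [div_mul_eq_mul_div, eq_div_iff hmC]
  ring_nf
  simp only [mul_assoc, mul_inv_cancel₀ hmC, mul_one]

theorem log_prod_even (m : ℕ) (hm : 2 ≤ m) (hme : Even m) (x : ℝ) (hx0 : 0 < x) (hx1 : x < 1) :
    Real.log (((1 - x) / x) ^ m + 1) =
      (∑ k ∈ Finset.range (m / 2),
        Real.log (1 - 2 * x * (1 - x) * (Real.cos ((2 * (k : ℝ) + 1) * Real.pi / m) + 1)))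
      - m * Real.log x := by
  obtain ⟨r, rfl⟩ := hme
  have hr : 1 ≤ r := by omega
  have hm2 : (r + r) / 2 = r := by omega
  have hm0 : 0 < r + r := by omega
  have hmR : ((r + r : ℕ) : ℝ) ≠ 0 := Nat.cast_ne_zero.mpr hm0.ne'
  rw [hm2]
  -- complex pairing
  have key : ∀ y : ℂ, y ^ (r + r) + 1 = ∏ k ∈ Finset.range r,
      (y ^ 2 - 2 * Complex.cos ((2 * (k : ℂ) + 1) * Real.pi / (r + r : ℕ)) * y + 1) := by
    intro y
    rw [cfact (r + r) hm0 y]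
    rw [Finset.prod_range_add
      (fun k => y - Complex.exp ((2 * (k : ℂ) + 1) * Real.pi / (r + r : ℕ) * Complex.I)) r r]
    rw [← Finset.prod_range_reflect
      (fun j => y - Complex.exp ((2 * ((r + j : ℕ) : ℂ) + 1) * Real.pi / (r + r : ℕ) * Complex.I)) r]
    rw [← Finset.prod_mul_distrib]
    refine Finset.prod_congr rfl fun k hk => ?_
    rw [Finset.mem_range] at hk
    set θ : ℂ := (2 * (k : ℂ) + 1) * Real.pi / (r + r : ℕ) with hθ
    have hcast : ((r + (r - 1 - k) : ℕ) : ℂ) = (r : ℂ) + ((r : ℂ) - 1 - (k : ℂ)) := by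
      have h1 : r + (r - 1 - k) = r + (r - (1 + k)) := by omega
      rw [h1, Nat.cast_add, Nat.cast_sub (by omega : 1 + k ≤ r)]
      push_cast
      ring
    have hmne : ((r + r : ℕ) : ℂ) ≠ 0 := Nat.cast_ne_zero.mpr hm0.ne'
    have harg : (2 * ((r + (r - 1 - k) : ℕ) : ℂ) + 1) * Real.pi / (r + r : ℕ) * Complex.I
        = -θ * Complex.I + 2 * Real.pi * Complex.I := by
      rw [hcast, hθ]
      have hrr : ((r + r : ℕ) : ℂ) = (r : ℂ) + (r : ℂ) := by push_cast; ring
      have hrne : (r : ℂ) ≠ 0 := Nat.cast_ne_zero.mpr (by omega)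
      field_simp [hrr, hrne]
      push_cast
      ring
    have hw2 : Complex.exp ((2 * ((r + (r - 1 - k) : ℕ) : ℂ) + 1) * Real.pi / (r + r : ℕ) * Complex.I)
        = Complex.exp (-θ * Complex.I) := by
      rw [harg, Complex.exp_add, Complex.exp_two_pi_mul_I, mul_one]
    simp only [hw2]
    have hsum : Complex.exp (θ * Complex.I) + Complex.exp (-θ * Complex.I) = 2 * Complex.cos θ :=
      (Complex.two_cos θ).symm
    have hprod : Complex.exp (θ * Complex.I) * Complex.exp (-θ * Complex.I) = 1 := by
      rw [← Complex.exp_add]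
      simp
    linear_combination hprod - y * hsum
  -- real version
  have keyR : ∀ y : ℝ, y ^ (r + r) + 1 = ∏ k ∈ Finset.range r,
      (y ^ 2 - 2 * Real.cos ((2 * (k : ℝ) + 1) * Real.pi / (r + r : ℕ)) * y + 1) := by
    intro y
    have h := key (y : ℂ)
    exact_mod_cast h
  set y : ℝ := (1 - x) / x with hy
  have hxne : x ≠ 0 := hx0.ne'
  -- each factor and positivity
  have hfac : ∀ k : ℕ, k < r →
      1 - 2 * x * (1 - x) * (Real.cos ((2 * (k : ℝ) + 1) * Real.pi / (r + r : ℕ)) + 1)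
        = x ^ 2 * (y ^ 2 - 2 * Real.cos ((2 * (k : ℝ) + 1) * Real.pi / (r + r : ℕ)) * y + 1) := by
    intro k _
    rw [hy]
    field_simp
    ring
  have hcoslt : ∀ k : ℕ, k < r → Real.cos ((2 * (k : ℝ) + 1) * Real.pi / (r + r : ℕ)) < 1 := by
    intro k hk
    have hθpos : 0 < (2 * (k : ℝ) + 1) * Real.pi / (r + r : ℕ) := by
      have : (0:ℝ) < ((r + r : ℕ) : ℝ) := by positivity
      positivity
    have hθle : (2 * (k : ℝ) + 1) * Real.pi / (r + r : ℕ) ≤ Real.pi := by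
      rw [div_le_iff₀ (by positivity)]
      have h1 : 2 * (k : ℝ) + 1 ≤ ((r + r : ℕ) : ℝ) := by
        have : 2 * k + 1 ≤ r + r := by omega
        exact_mod_cast this
      nlinarith [Real.pi_pos]
    have := Real.cos_lt_cos_of_nonneg_of_le_pi (le_refl 0) hθle hθpos
    simpa using this
  have hpos : ∀ k ∈ Finset.range r,
      0 < 1 - 2 * x * (1 - x) * (Real.cos ((2 * (k : ℝ) + 1) * Real.pi / (r + r : ℕ)) + 1) := by
    intro k hk
    rw [Finset.mem_range] at hk
    have hc1 := hcoslt k hk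
    have hc2 := Real.neg_one_le_cos ((2 * (k : ℝ) + 1) * Real.pi / (r + r : ℕ))
    set c := Real.cos ((2 * (k : ℝ) + 1) * Real.pi / (r + r : ℕ))
    have ht : 0 < x * (1 - x) := by nlinarith
    nlinarith [mul_pos ht (sub_pos.mpr hc1), sq_nonneg (1 - 2 * x)]
  -- product identity
  have hprodeq : (∏ k ∈ Finset.range r,
      (1 - 2 * x * (1 - x) * (Real.cos ((2 * (k : ℝ) + 1) * Real.pi / (r + r : ℕ)) + 1)))
      = x ^ (r + r) * (y ^ (r + r) + 1) := by
    rw [Finset.prod_congr rfl (fun k hk => hfac k (Finset.mem_range.mp hk)),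
      Finset.prod_mul_distrib, Finset.prod_const, Finset.card_range, keyR y]
    rw [← pow_mul, show 2 * r = r + r from by omega]
  have hS0 : (∏ k ∈ Finset.range r,
      (1 - 2 * x * (1 - x) * (Real.cos ((2 * (k : ℝ) + 1) * Real.pi / (r + r : ℕ)) + 1))) ≠ 0 :=
    ne_of_gt (Finset.prod_pos hpos)
  have hxm : x ^ (r + r) ≠ 0 := pow_ne_zero _ hxne
  have hmain : y ^ (r + r) + 1 = (∏ k ∈ Finset.range r,
      (1 - 2 * x * (1 - x) * (Real.cos ((2 * (k : ℝ) + 1) * Real.pi / (r + r : ℕ)) + 1)))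
      / x ^ (r + r) := by
    rw [hprodeq]
    field_simp
  rw [hmain, Real.log_div hS0 hxm, Real.log_prod (fun k hk => (hpos k hk).ne'),
    Real.log_pow]
end

section
/- Let m ≥ 1 be an odd integer and let x be a real number with 0 < x < 1. Then log(((1-x)/x)^m + 1) = Σ_{k=0}^{(m-3)/2} log(1 - 2x(1-x)(φ_k + 1)) - m·log x, where φ_k = cos((2k+1)π/m) and the sum is empty (equal to zero) when m = 1. -/
open Complex Polynomial Finset in
theorem aux_log_pow (m : ℕ) (hm : 0 < m) (y : ℝ) (hy : 0 < y) :
    Real.log (y ^ m + 1) = ∑ j ∈ Finset.range m,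
      Real.log (y^2 - 2 * Real.cos ((2*(j:ℝ)+1) * Real.pi / m) * y + 1) / 2 := by
  have hm' : (m:ℂ) ≠ 0 := Nat.cast_ne_zero.mpr (by omega)
  have hfact : ((y:ℂ)) ^ m + 1 = ∏ j ∈ Finset.range m,
      ((y:ℂ) - Complex.exp (((2*(j:ℝ)+1) * Real.pi / m : ℝ) * Complex.I)) := by
    have hζ : IsPrimitiveRoot (Complex.exp (2 * ↑Real.pi * I / m)) m :=
      Complex.isPrimitiveRoot_exp m (by omega)
    have hα : (Complex.exp (↑Real.pi * I / m)) ^ m = -1 := by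
      rw [← Complex.exp_nat_mul, mul_div_assoc', mul_comm, mul_div_assoc,
        div_self hm', mul_one]
      exact Complex.exp_pi_mul_I
    have hfac := X_pow_sub_C_eq_prod hζ hm hα
    have heval := congrArg (Polynomial.eval (y:ℂ)) hfac
    simp only [eval_sub, eval_pow, eval_X, eval_C, eval_prod] at heval
    rw [sub_neg_eq_add] at heval
    rw [heval]
    refine Finset.prod_congr rfl fun j hj => ?_
    congr 1
    rw [← Complex.exp_nat_mul, ← Complex.exp_add]
    congr 1
    push_cast
    field_simp
  -- each root power
  have hrootpow : ∀ j : ℕ, (Complex.exp (((2*(j:ℝ)+1) * Real.pi / m : ℝ) * Complex.I)) ^ m = -1 := by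
    intro j
    rw [← Complex.exp_nat_mul]
    have : (m:ℂ) * ((((2*(j:ℝ)+1) * Real.pi / m : ℝ)):ℂ) * I = ((2*j+1 : ℕ):ℂ) * (↑Real.pi * I) := by
      push_cast
      field_simp
    rw [← mul_assoc, this, Complex.exp_nat_mul, Complex.exp_pi_mul_I]
    exact Odd.neg_one_pow ⟨j, by ring⟩
  have hne : ∀ j ∈ Finset.range m,
      (y:ℂ) - Complex.exp (((2*(j:ℝ)+1) * Real.pi / m : ℝ) * Complex.I) ≠ 0 := by
    intro j _ h
    rw [sub_eq_zero] at h
    have := hrootpow j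
    rw [← h] at this
    have h2 : ((y^m : ℝ) : ℂ) = ((-1 : ℝ):ℂ) := by push_cast; simpa using this
    have := Complex.ofReal_inj.mp h2
    nlinarith [pow_pos hy m]
  have hnormsq : ∀ j : ℕ, Complex.normSq
      ((y:ℂ) - Complex.exp (((2*(j:ℝ)+1) * Real.pi / m : ℝ) * Complex.I))
      = y^2 - 2 * Real.cos ((2*(j:ℝ)+1) * Real.pi / m) * y + 1 := by
    intro j
    set θ : ℝ := (2*(j:ℝ)+1) * Real.pi / m
    rw [Complex.normSq_apply]
    simp only [Complex.sub_re, Complex.sub_im, Complex.exp_ofReal_mul_I_re,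
      Complex.exp_ofReal_mul_I_im, Complex.ofReal_re, Complex.ofReal_im, zero_sub]
    nlinarith [Real.sin_sq_add_cos_sq θ]
  have habs : y ^ m + 1 = ‖(y:ℂ)^m + 1‖ := by
    rw [show ((y:ℂ)^m+1) = ((y^m+1 : ℝ) : ℂ) by push_cast; ring, Complex.norm_real, Real.norm_eq_abs,
      abs_of_pos (by positivity)]
  rw [habs, hfact, norm_prod, Real.log_prod (fun j hj => by
    simpa using norm_ne_zero_iff.mpr (hne j hj))]
  refine Finset.sum_congr rfl fun j hj => ?_
  rw [Complex.norm_def, hnormsq j, Real.log_sqrt (by rw [← hnormsq j]; exact Complex.normSq_nonneg _)]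

theorem log_prod_odd (m : ℕ) (hm : 1 ≤ m) (hmo : Odd m) (x : ℝ) (hx0 : 0 < x) (hx1 : x < 1) :
    Real.log (((1 - x) / x) ^ m + 1) =
      (∑ k ∈ Finset.range ((m - 1) / 2),
        Real.log (1 - 2 * x * (1 - x) * (Real.cos ((2 * (k : ℝ) + 1) * Real.pi / m) + 1)))
      - m * Real.log x := by
  obtain ⟨h, rfl⟩ := hmo
  have hpi := Real.pi_pos
  set y : ℝ := (1 - x) / x with hy_def
  have hy : 0 < y := div_pos (by linarith) hx0
  have hm2 : (2*h+1 - 1)/2 = h := by omega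
  have hmr : ((2*h+1 : ℕ) : ℝ) = 2*h+1 := by push_cast; ring
  have hmr0 : (0:ℝ) < 2*(h:ℝ)+1 := by positivity
  -- the per-index function
  set f : ℕ → ℝ := fun j =>
    Real.log (y^2 - 2 * Real.cos ((2*(j:ℝ)+1) * Real.pi / ((2*h+1 : ℕ):ℝ)) * y + 1) / 2
    with hf_def
  have haux := aux_log_pow (2*h+1) (by omega) y hy
  -- split the sum
  have hsplit : ∑ j ∈ Finset.range (2*h+1), f j
      = (∑ k ∈ Finset.range h, f k) + ((∑ k ∈ Finset.range h, f k) + f h) := by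
    rw [show 2*h+1 = h + (h+1) by omega, Finset.sum_range_add]
    congr 1
    rw [Finset.sum_range_succ']
    congr 1
    rw [← Finset.sum_range_reflect]
    refine Finset.sum_congr rfl fun i hi => ?_
    simp only [Finset.mem_range] at hi
    have harg : ((h + (h - 1 - i + 1) : ℕ) : ℝ) = 2*(h:ℝ) - i := by
      have : h + (h - 1 - i + 1) = 2*h - i := by omega
      rw [this, Nat.cast_sub (by omega)]; push_cast; ring
    simp only [hf_def]
    congr 2
    rw [harg]
    have : (2*(2*(h:ℝ) - i)+1) * Real.pi / ((2*h+1 : ℕ):ℝ)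
        = 2*Real.pi - (2*(i:ℝ)+1) * Real.pi / ((2*h+1 : ℕ):ℝ) := by
      rw [hmr]; field_simp; ring
    rw [this, Real.cos_two_pi_sub]
  -- the middle term
  have hmid : f h = Real.log (y + 1) := by
    simp only [hf_def]
    have harg : (2*(h:ℝ)+1) * Real.pi / ((2*h+1 : ℕ):ℝ) = Real.pi := by
      rw [hmr]; field_simp
    rw [harg, Real.cos_pi]
    rw [show y^2 - 2*(-1)*y + 1 = (y+1)^2 by ring, Real.log_pow]
    push_cast; ring
  -- the paired terms
  have hpair : ∀ k ∈ Finset.range h, f k + f k =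
      Real.log (1 - 2 * x * (1 - x) * (Real.cos ((2 * (k : ℝ) + 1) * Real.pi / ((2*h+1:ℕ):ℝ)) + 1))
        - 2 * Real.log x := by
    intro k hk
    simp only [Finset.mem_range] at hk
    set c : ℝ := Real.cos ((2 * (k : ℝ) + 1) * Real.pi / ((2*h+1:ℕ):ℝ)) with hc_def
    have hθpos : 0 < (2 * (k : ℝ) + 1) * Real.pi / ((2*h+1:ℕ):ℝ) := by
      rw [hmr]; positivity
    have hθlt : (2 * (k : ℝ) + 1) * Real.pi / ((2*h+1:ℕ):ℝ) < Real.pi := by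
      rw [hmr, div_lt_iff₀ hmr0]
      have : (2*(k:ℝ)+1) < 2*(h:ℝ)+1 := by
        have : (k:ℝ) < h := by exact_mod_cast hk
        linarith
      nlinarith
    have hc1 : c < 1 := by
      refine lt_of_le_of_ne (Real.cos_le_one _) fun hc => ?_
      have := (Real.cos_eq_one_iff_of_lt_of_lt (by linarith) (by linarith)).mp hc
      linarith
    have hc2 : -1 ≤ c := Real.neg_one_le_cos _
    have hnum : 0 < 1 - 2 * x * (1 - x) * (c + 1) := by
      nlinarith [sq_nonneg (2*x-1)]
    have heq : y^2 - 2*c*y + 1 = (1 - 2 * x * (1 - x) * (c + 1)) / x^2 := by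
      rw [hy_def]; field_simp; ring
    simp only [hf_def, ← hc_def, heq]
    rw [Real.log_div hnum.ne' (by positivity), Real.log_pow]
    push_cast; ring
  -- put it together
  rw [haux, hsplit, hmid, hm2]
  rw [← add_assoc, ← Finset.sum_add_distrib, Finset.sum_congr rfl hpair,
    show y + 1 = 1/x by rw [hy_def]; field_simp; ring, one_div, Real.log_inv,
    Finset.sum_sub_distrib, Finset.sum_const, Finset.card_range, nsmul_eq_mul]
  push_cast
  ring
end
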